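/- Let K ≥ 2 and r : {1,…,K} → (0,∞), and let σ be any permutation of {1,…,K}. Define the sequence s₁ = r_{σ(1)} and, for j = 2, …, K, sinh s_j = max( sinh s_{j-1} · cosh r_{σ(j)} , cosh s_{j-1} · sinh r_{σ(j)} ). Then sinh s_K ≤ tanh( max_{1≤k≤K} r_k ) · ∏_{k=1}^{K} cosh r_k, and equality holds whenever the maximal value max_k r_k equals r_{σ(1)} (i.e., the largest squeezing parameter is among the first modes to be concentrated). -/
import Mathlib

lemma my_tanh_le_tanh {x y : ℝ} (h : x ≤ y) : Real.tanh x ≤ Real.tanh y := by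
  rw [Real.tanh_eq_sinh_div_cosh, Real.tanh_eq_sinh_div_cosh,
    div_le_div_iff₀ (Real.cosh_pos x) (Real.cosh_pos y)]
  have h1 : Real.sinh (x - y) ≤ 0 := Real.sinh_nonpos_iff.mpr (by linarith)
  rw [Real.sinh_sub] at h1
  linarith

lemma my_tanh_nonneg {x : ℝ} (h : 0 ≤ x) : 0 ≤ Real.tanh x := by
  rw [Real.tanh_eq_sinh_div_cosh]
  exact div_nonneg (Real.sinh_nonneg_iff.mpr h) (Real.cosh_pos x).le

lemma my_tanh_mul_cosh (x : ℝ) : Real.tanh x * Real.cosh x = Real.sinh x := by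
  rw [Real.tanh_eq_sinh_div_cosh]; field_simp

/-- Iterated pairwise entanglement concentration of `K` two-mode squeezed vacuum states
with positive squeezing parameters `r 0, …, r (K-1)`, performed in the order given by a
permutation `σ` (combining the accumulated value `s j` with the next mode via
`sinh (s (j+1)) = max (sinh (s j) cosh (r (σ (j+1)))) (cosh (s j) sinh (r (σ (j+1))))`),
always satisfies `sinh (s (K-1)) ≤ tanh (max_k r k) · ∏_k cosh (r k)`, with equality
whenever the largest squeezing parameter comes first, i.e. `r (σ 0) = max_k r k`. -/
theorem stmt_3 (K : ℕ) (hK : 2 ≤ K) (r : Fin K → ℝ) (hr : ∀ k, 0 < r k)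
    (σ : Equiv.Perm (Fin K)) (s : ℕ → ℝ)
    (hs0 : s 0 = r (σ ⟨0, by omega⟩))
    (hs : ∀ j : ℕ, (h : j + 1 < K) →
      Real.sinh (s (j + 1)) =
        max (Real.sinh (s j) * Real.cosh (r (σ ⟨j + 1, h⟩)))
            (Real.cosh (s j) * Real.sinh (r (σ ⟨j + 1, h⟩)))) :
    Real.sinh (s (K - 1)) ≤
        Real.tanh (Finset.univ.sup' (Finset.univ_nonempty_iff.mpr ⟨⟨0, by omega⟩⟩) r) *
          ∏ k, Real.cosh (r k) ∧
      (r (σ ⟨0, by omega⟩) =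
          Finset.univ.sup' (Finset.univ_nonempty_iff.mpr ⟨⟨0, by omega⟩⟩) r →
        Real.sinh (s (K - 1)) =
          Real.tanh (Finset.univ.sup' (Finset.univ_nonempty_iff.mpr ⟨⟨0, by omega⟩⟩) r) *
            ∏ k, Real.cosh (r k)) := by
  have hne : (Finset.univ : Finset (Fin K)).Nonempty :=
    Finset.univ_nonempty_iff.mpr ⟨⟨0, by omega⟩⟩
  set M : ℝ := Finset.univ.sup' hne r with hMdef
  have hMub : ∀ k, r k ≤ M := fun k => Finset.le_sup' r (Finset.mem_univ k)
  have hM0 : 0 < M := by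
    obtain ⟨i, _, hi⟩ := Finset.exists_mem_eq_sup' hne r
    rw [hMdef, hi]; exact hr i
  -- partial products
  set P : ℕ → ℝ := fun j =>
    ∏ i ∈ Finset.univ.filter (fun i : Fin K => (i : ℕ) ≤ j), Real.cosh (r (σ i)) with hPdef
  have hP1 : ∀ j, 1 ≤ P j := by
    intro j
    simp only [hPdef]
    have h := Finset.prod_le_prod (s := Finset.univ.filter (fun i : Fin K => (i : ℕ) ≤ j))
      (f := fun _ => (1 : ℝ)) (g := fun i => Real.cosh (r (σ i)))
      (fun i _ => zero_le_one) (fun i _ => Real.one_le_cosh _)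
    simpa using h
  have hP0 : P 0 = Real.cosh (r (σ ⟨0, by omega⟩)) := by
    simp only [hPdef]
    have : Finset.univ.filter (fun i : Fin K => (i : ℕ) ≤ 0) = {⟨0, by omega⟩} := by
      ext i
      simp only [Finset.mem_filter, Finset.mem_univ, true_and, Finset.mem_singleton]
      constructor
      · intro h
        apply Fin.ext
        show (i : ℕ) = 0
        omega
      · intro h; subst h; exact Nat.le_refl 0
    rw [this, Finset.prod_singleton]
  have hPstep : ∀ j, ∀ (hj : j + 1 < K),
      P (j + 1) = P j * Real.cosh (r (σ ⟨j + 1, hj⟩)) := by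
    intro j hj
    simp only [hPdef]
    have : Finset.univ.filter (fun i : Fin K => (i : ℕ) ≤ j + 1) =
        insert ⟨j + 1, hj⟩ (Finset.univ.filter (fun i : Fin K => (i : ℕ) ≤ j)) := by
      ext i
      simp only [Finset.mem_filter, Finset.mem_univ, true_and, Finset.mem_insert]
      constructor
      · intro h
        rcases Nat.lt_or_ge (i : ℕ) (j + 1) with h' | h'
        · right; omega
        · left
          apply Fin.ext
          show (i : ℕ) = j + 1
          omega
      · rintro (h | h)
        · subst h
          show j + 1 ≤ j + 1
          omega
        · omega
    rw [this, Finset.prod_insert (by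
      simp only [Finset.mem_filter, Finset.mem_univ, true_and]
      show ¬ (j + 1 ≤ j)
      omega)]
    ring
  have hPend : P (K - 1) = ∏ k, Real.cosh (r k) := by
    simp only [hPdef]
    have : Finset.univ.filter (fun i : Fin K => (i : ℕ) ≤ K - 1) = Finset.univ := by
      ext i; simp only [Finset.mem_filter, Finset.mem_univ, true_and, iff_true]
      have := i.isLt
      omega
    rw [this]
    exact Equiv.prod_comp σ (fun k => Real.cosh (r k))
  -- main induction
  have key : ∀ j, j < K → Real.cosh (s j) ≤ P j ∧
      Real.sinh (s j) ≤ Real.tanh M * P j ∧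
      (r (σ ⟨0, by omega⟩) = M → Real.sinh (s j) = Real.tanh M * P j) := by
    intro j
    induction j with
    | zero =>
      intro _
      refine ⟨by rw [hs0, hP0], ?_, ?_⟩
      · rw [hs0, hP0, ← my_tanh_mul_cosh]
        exact mul_le_mul_of_nonneg_right (my_tanh_le_tanh (hMub _)) (Real.cosh_pos _).le
      · intro hmax
        rw [hs0, hP0, ← my_tanh_mul_cosh, hmax]
    | succ j ih =>
      intro hj
      obtain ⟨ihC, ihS, ihE⟩ := ih (by omega)
      set a : ℝ := r (σ ⟨j + 1, hj⟩) with hadef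
      have ha : 0 < a := hr _
      have hsa : 0 ≤ Real.sinh a := Real.sinh_nonneg_iff.mpr ha.le
      have hrec := hs j hj
      have hPs := hPstep j hj
      have hca := Real.cosh_pos a
      have hcs := Real.cosh_pos (s j)
      -- cosh bound
      have hC : Real.cosh (s (j + 1)) ≤ P (j + 1) := by
        have hca2 : 1 ≤ Real.cosh a ^ 2 := by nlinarith [Real.one_le_cosh a]
        have hcs2 : 1 ≤ Real.cosh (s j) ^ 2 := by nlinarith [Real.one_le_cosh (s j)]
        have hsq : Real.cosh (s (j + 1)) ^ 2 ≤ (Real.cosh (s j) * Real.cosh a) ^ 2 := by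
          rw [Real.cosh_sq, hrec]
          rcases max_choice (Real.sinh (s j) * Real.cosh a)
            (Real.cosh (s j) * Real.sinh a) with h | h <;> rw [h]
          · have e : (Real.sinh (s j) * Real.cosh a) ^ 2 + Real.cosh a ^ 2 =
                (Real.cosh (s j) * Real.cosh a) ^ 2 := by
              linear_combination (-(Real.cosh a ^ 2)) * Real.cosh_sq (s j)
            linarith
          · have e : (Real.cosh (s j) * Real.sinh a) ^ 2 + Real.cosh (s j) ^ 2 =
                (Real.cosh (s j) * Real.cosh a) ^ 2 := by
              linear_combination (-(Real.cosh (s j) ^ 2)) * Real.cosh_sq a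
            linarith
        have h1 : Real.cosh (s (j + 1)) ≤ Real.cosh (s j) * Real.cosh a :=
          (pow_le_pow_iff_left₀ (Real.cosh_pos _).le
            (by positivity) two_ne_zero).mp hsq
        calc Real.cosh (s (j + 1)) ≤ Real.cosh (s j) * Real.cosh a := h1
          _ ≤ P j * Real.cosh a := mul_le_mul_of_nonneg_right ihC hca.le
          _ = P (j + 1) := hPs.symm
      refine ⟨hC, ?_, ?_⟩
      · -- sinh bound
        rw [hrec, hPs]
        apply max_le
        · exact mul_le_mul_of_nonneg_right ihS hca.le |>.trans_eq (by ring)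
        · have hta : Real.tanh a ≤ Real.tanh M := my_tanh_le_tanh (hMub _)
          have htan : 0 ≤ Real.tanh a := my_tanh_nonneg ha.le
          have hm : Real.cosh (s j) * Real.tanh a ≤ P j * Real.tanh M :=
            mul_le_mul ihC hta htan (by linarith [hP1 j])
          have hm2 := mul_le_mul_of_nonneg_right hm hca.le
          calc Real.cosh (s j) * Real.sinh a
              = Real.cosh (s j) * Real.tanh a * Real.cosh a := by
                rw [mul_assoc, my_tanh_mul_cosh]
            _ ≤ P j * Real.tanh M * Real.cosh a := hm2
            _ = Real.tanh M * (P j * Real.cosh a) := by ring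
      · -- equality case
        intro hmax
        have hEq := ihE hmax
        rw [hrec, hPs, hEq]
        have h2 : Real.cosh (s j) * Real.sinh a ≤ Real.tanh M * P j * Real.cosh a := by
          have hta : Real.tanh a ≤ Real.tanh M := my_tanh_le_tanh (hMub _)
          have htan : 0 ≤ Real.tanh a := my_tanh_nonneg ha.le
          have hm : Real.cosh (s j) * Real.tanh a ≤ P j * Real.tanh M :=
            mul_le_mul ihC hta htan (by linarith [hP1 j])
          have hm2 := mul_le_mul_of_nonneg_right hm hca.le
          calc Real.cosh (s j) * Real.sinh a
              = Real.cosh (s j) * Real.tanh a * Real.cosh a := by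
                rw [mul_assoc, my_tanh_mul_cosh]
            _ ≤ P j * Real.tanh M * Real.cosh a := hm2
            _ = Real.tanh M * P j * Real.cosh a := by ring
        rw [max_eq_left h2]
        ring
  obtain ⟨_, hS, hE⟩ := key (K - 1) (by omega)
  rw [hPend] at hS hE
  exact ⟨hS, fun h => hE h⟩
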